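/- Let D = {(z,w) ∈ ℂ^{n₀}×ℂ : |w|^{2p} < e^{-μ‖z‖²}} (the case l = 1, n₁ = 1) and define F(z,w) = (√2·z, w²). Then F is a proper holomorphic self-mapping of D that is not an automorphism. -/

import Mathlib

open MeasureTheory Real

/-- Remark 1.10 of Bi–Tu: for `D = {(z,w) ∈ ℂ^{n₀}×ℂ : |w|^{2p} < e^{-μ‖z‖²}}`,
the map `F(z,w) = (√2·z, w²)` is a proper holomorphic self-map of `D` which is
not an automorphism (it is not injective on `D`). -/
theorem sqrt2_square_map_proper_self_map
    (n₀ : ℕ) (p μ : ℝ) (hp : 0 < p) (hμ : 0 < μ)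
    (D : Set (EuclideanSpace ℂ (Fin n₀) × ℂ))
    (hD : D = {x | ‖x.2‖ ^ (2 * p) < Real.exp (-μ * ‖x.1‖ ^ 2)})
    (F : EuclideanSpace ℂ (Fin n₀) × ℂ → EuclideanSpace ℂ (Fin n₀) × ℂ)
    (hF : ∀ x, F x = ((Real.sqrt 2 : ℂ) • x.1, x.2 ^ 2)) :
    Differentiable ℂ F ∧ Set.MapsTo F D D ∧
      (∀ K, K ⊆ D → IsCompact K → IsCompact (D ∩ F ⁻¹' K)) ∧
      ¬ Set.InjOn F D := by
  have hFeq : F = fun x : EuclideanSpace ℂ (Fin n₀) × ℂ =>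
      ((Real.sqrt 2 : ℂ) • x.1, x.2 ^ 2) := funext hF
  -- key identity: membership of F x in D is equivalent to squared inequality
  have key : ∀ x : EuclideanSpace ℂ (Fin n₀) × ℂ,
      (‖(F x).2‖ ^ (2 * p) = (‖x.2‖ ^ (2 * p)) ^ 2) ∧
      (Real.exp (-μ * ‖(F x).1‖ ^ 2) = (Real.exp (-μ * ‖x.1‖ ^ 2)) ^ 2) := by
    intro x
    rw [hF]
    constructor
    · have ha : (0:ℝ) ≤ ‖x.2‖ := (norm_nonneg _)
      rw [norm_pow]
      rw [← Real.rpow_natCast ‖x.2‖ 2, ← Real.rpow_mul ha,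
        mul_comm ((2:ℕ):ℝ) (2*p), Real.rpow_mul ha, Real.rpow_natCast]
    · have : ‖(Real.sqrt 2 : ℂ) • x.1‖ ^ 2 = 2 * ‖x.1‖ ^ 2 := by
        rw [norm_smul]
        rw [mul_pow]
        norm_num [Complex.norm_real, Real.sq_sqrt, abs_of_nonneg (Real.sqrt_nonneg 2)]
      rw [this, ← Real.exp_nat_mul]
      ring_nf
  have hmem : ∀ x : EuclideanSpace ℂ (Fin n₀) × ℂ, F x ∈ D ↔ x ∈ D := by
    intro x
    obtain ⟨h1, h2⟩ := key x
    simp only [hD, Set.mem_setOf_eq, h1, h2]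
    constructor
    · intro h
      exact lt_of_pow_lt_pow_left₀ 2 (Real.exp_pos _).le h
    · intro h
      have ha : (0:ℝ) ≤ ‖x.2‖ ^ (2 * p) := Real.rpow_nonneg (norm_nonneg _) _
      exact pow_lt_pow_left₀ h ha (by norm_num)
  refine ⟨?_, ?_, ?_, ?_⟩
  · rw [hFeq]
    apply Differentiable.prodMk
    · exact (differentiable_fst (𝕜 := ℂ) (E := EuclideanSpace ℂ (Fin n₀)) (F := ℂ)).const_smul (Real.sqrt 2 : ℂ)
    · exact (differentiable_snd).pow 2
  · intro x hx; exact (hmem x).2 hx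
  · intro K hKD hK
    have hpre : F ⁻¹' K ⊆ D := fun x hx => (hmem x).1 (hKD hx)
    have heq : D ∩ F ⁻¹' K = F ⁻¹' K := Set.inter_eq_self_of_subset_right hpre
    rw [heq]
    have hFc : Continuous F := by
      rw [hFeq]
      exact (continuous_fst.const_smul (Real.sqrt 2 : ℂ)).prodMk (continuous_snd.pow 2)
    have hclosed : IsClosed (F ⁻¹' K) := hK.isClosed.preimage hFc
    have hbdd : Bornology.IsBounded (F ⁻¹' K) := by
      obtain ⟨C, hC⟩ := hK.isBounded.exists_norm_le
      rw [Metric.isBounded_iff_subset_closedBall 0]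
      refine ⟨max 1 C, fun x hx => ?_⟩
      have hFx := hC (F x) hx
      rw [hF] at hFx
      simp only [Metric.mem_closedBall, dist_zero_right, Prod.norm_def]
      have h1 : ‖(Real.sqrt 2 : ℂ) • x.1‖ ≤ C := le_trans (le_max_left _ _) hFx
      have h2 : ‖x.2 ^ 2‖ ≤ C := le_trans (le_max_right _ _) hFx
      have hz : ‖x.1‖ ≤ C := by
        rw [norm_smul, Complex.norm_real, Real.norm_eq_abs,
          abs_of_nonneg (Real.sqrt_nonneg 2)] at h1
        nlinarith [Real.sqrt_le_sqrt (by norm_num : (1:ℝ) ≤ 2), Real.sqrt_one,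
          norm_nonneg x.1, Real.sqrt_nonneg 2]
      have hw : ‖x.2‖ ≤ max 1 C := by
        rcases le_or_gt ‖x.2‖ 1 with h | h
        · exact le_trans h (le_max_left _ _)
        · have : ‖x.2‖ ≤ ‖x.2‖ ^ 2 := by nlinarith
          rw [norm_pow] at h2
          exact le_trans (le_trans this h2) (le_max_right _ _)
      exact max_le (le_trans hz (le_max_right _ _)) hw
    exact Metric.isCompact_of_isClosed_isBounded hclosed hbdd
  · intro hinj
    have hhalf : ((0 : EuclideanSpace ℂ (Fin n₀)), (1/2 : ℂ)) ∈ D ∧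
        ((0 : EuclideanSpace ℂ (Fin n₀)), (-(1/2) : ℂ)) ∈ D := by
      constructor <;>
      · simp only [hD, Set.mem_setOf_eq, norm_zero, ne_eq, norm_neg]
        have habs : ‖(1/2 : ℂ)‖ = (1/2 : ℝ) := by norm_num
        rw [habs]
        norm_num
        exact Real.rpow_lt_one (by norm_num) (by norm_num) (by positivity)
    have := hinj hhalf.1 hhalf.2 (by rw [hF, hF]; norm_num)
    norm_num at this
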